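/- For every integer m ≥ 1, consider in the multivariate formal power series ring ℚ⟦x₁,…,x_m⟧ the series F = (Σ_{p=1}^{m} B(x_p)) · Π_{q=1}^{m} B'(x_q), where B(x_p) denotes the substitution of x_p into the univariate power series Σ_{n≥0} bernoulli_n X^n/n! = X/(e^X − 1), and B'(x_q) denotes the substitution of x_q into Σ_{n≥0} bernoulli'_n X^n/n! = X/(1 − e^{−X}). Then the homogeneous component of total degree m of F vanishes. -/

import Mathlib

/-- Substitution of the single variable `x_p` into a univariate power series `φ`: the
multivariate power series `φ(x_p)`, whose coefficient on the monomial `x_p^n` is the `n`-th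
coefficient of `φ`, and whose coefficient on any monomial involving another variable is `0`. -/
noncomputable def substVar {m : ℕ} (p : Fin m) (φ : PowerSeries ℚ) :
    MvPowerSeries (Fin m) ℚ :=
  fun d => if d.support ⊆ ({p} : Finset (Fin m)) then PowerSeries.coeff (d p) φ else 0

open PowerSeries

lemma coeff_substVar {m : ℕ} (p : Fin m) (φ : PowerSeries ℚ) (d : Fin m →₀ ℕ) :
    MvPowerSeries.coeff d (substVar p φ) =
      if d.support ⊆ ({p} : Finset (Fin m)) then PowerSeries.coeff (d p) φ else 0 := rfl

lemma coeff_derivativeFun' (f : PowerSeries ℚ) (n : ℕ) :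
    coeff n (derivativeFun f) = coeff (n + 1) f * (n + 1) := coeff_derivative f n

lemma derivativeFun_C' (r : ℚ) : derivativeFun (C r) = 0 := derivative_C

lemma derivFun_exp : derivativeFun (exp ℚ) = exp ℚ := by
  ext n
  rw [coeff_derivativeFun', coeff_exp, coeff_exp]
  simp [Nat.factorial_succ]
  field_simp

lemma bps_eq : bernoulliPowerSeries ℚ = PowerSeries.mk fun n => bernoulli n / (n.factorial : ℚ) := by
  ext n; simp [bernoulliPowerSeries, coeff_mk]

lemma bps'_eq : bernoulli'PowerSeries ℚ = PowerSeries.mk fun n => bernoulli' n / (n.factorial : ℚ) := by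
  ext n; simp [bernoulli'PowerSeries, coeff_mk]

lemma derivFun_exp_sub_one : derivativeFun (exp ℚ - 1) = exp ℚ := by
  have h : (exp ℚ - 1 : PowerSeries ℚ) = exp ℚ + C (-1) := by
    rw [map_neg, map_one]; ring
  rw [h, derivativeFun_add, derivativeFun_C', derivFun_exp, add_zero]

lemma key_mul :
    (PowerSeries.mk fun n => bernoulli n / (n.factorial : ℚ)) *
      (PowerSeries.mk fun n => bernoulli' n / (n.factorial : ℚ)) =
    PowerSeries.mk fun n => (1 - (n : ℚ)) * (bernoulli' n / (n.factorial : ℚ)) := by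
  set B := PowerSeries.mk fun n => bernoulli n / (n.factorial : ℚ) with hB
  set B' := PowerSeries.mk fun n => bernoulli' n / (n.factorial : ℚ) with hB'
  set E := (exp ℚ - 1 : PowerSeries ℚ) with hEdef
  have hE : E ≠ 0 := by
    intro h
    have := congrArg (coeff 1) h
    simp [hEdef, coeff_exp, coeff_one] at this
  have h1 : B * E = X := by rw [hB, ← bps_eq]; exact bernoulliPowerSeries_mul_exp_sub_one ℚ
  have h2 : B' * E = X * exp ℚ := by rw [hB', ← bps'_eq]; exact bernoulli'PowerSeries_mul_exp_sub_one ℚ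
  have hd : B * exp ℚ + E * derivativeFun B = 1 := by
    have hds : derivativeFun (B * E) = derivativeFun X := by rw [h1]
    rw [derivativeFun_mul, derivFun_exp_sub_one] at hds
    have hX : derivativeFun (X : PowerSeries ℚ) = 1 := derivative_X
    rw [hX] at hds
    simpa [smul_eq_mul] using hds
  have hM : (PowerSeries.mk fun n => (1 - (n : ℚ)) * (bernoulli' n / (n.factorial : ℚ)))
      = B - X * derivativeFun B := by
    ext n
    rw [map_sub, coeff_mk, hB, coeff_mk]
    cases n with
    | zero =>
      simp [bernoulli_zero, bernoulli'_zero, (by rw [mul_comm]; exact coeff_zero_mul_X _ :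
        (coeff 0) (X * derivativeFun B) = 0)]
    | succ k =>
      rw [coeff_succ_X_mul, coeff_derivativeFun', coeff_mk]
      rcases Nat.eq_zero_or_pos k with hk | hk
      · subst hk
        norm_num [bernoulli_one, bernoulli'_one]
      · rw [bernoulli_eq_bernoulli'_of_ne_one (by omega)]
        push_cast
        ring
  symm
  apply mul_right_cancel₀ (mul_ne_zero hE hE)
  rw [hM]
  linear_combination (E) * h1 - (X * E) * hd - (B * E) * h2

lemma support_single_of_add {m : ℕ} {p : Fin m} {u v d : Fin m →₀ ℕ}
    (h : u + v = d) (hd : d.support ⊆ ({p} : Finset (Fin m))) :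
    Finsupp.single p (u p) = u := by
  ext b
  by_cases hb : b = p
  · subst hb; simp
  · rw [Finsupp.single_eq_of_ne' (Ne.symm hb)]
    have hdb : d b = 0 := by
      by_contra hne
      exact hb (Finset.mem_singleton.mp (hd (Finsupp.mem_support_iff.mpr hne)))
    have : u b + v b = 0 := by rw [← Finsupp.add_apply, h, hdb]
    omega

lemma substVar_mul {m : ℕ} (p : Fin m) (φ ψ : PowerSeries ℚ) :
    substVar p (φ * ψ) = substVar p φ * substVar p ψ := by
  ext d
  rw [MvPowerSeries.coeff_mul, coeff_substVar]
  by_cases hd : d.support ⊆ ({p} : Finset (Fin m))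
  · rw [if_pos hd, PowerSeries.coeff_mul]
    rw [Finset.sum_nbij' (i := fun uv => (uv.1 p, uv.2 p))
      (j := fun kl => (Finsupp.single p kl.1, Finsupp.single p kl.2))]
    · intro uv huv
      rw [Finset.HasAntidiagonal.mem_antidiagonal] at huv
      rw [Finset.HasAntidiagonal.mem_antidiagonal, ← Finsupp.add_apply, huv]
    · intro kl hkl
      rw [Finset.HasAntidiagonal.mem_antidiagonal] at hkl
      rw [Finset.HasAntidiagonal.mem_antidiagonal, ← Finsupp.single_add, hkl]
      ext b
      by_cases hb : b = p
      · subst hb; simp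
      · rw [Finsupp.single_eq_of_ne' (Ne.symm hb)]
        by_contra hne
        exact hb (Finset.mem_singleton.mp (hd (Finsupp.mem_support_iff.mpr (Ne.symm hne))))
    · intro uv huv
      rw [Finset.HasAntidiagonal.mem_antidiagonal] at huv
      have h1 := support_single_of_add huv hd
      have h2 := support_single_of_add (by rw [add_comm]; exact huv) hd
      simp only [Prod.mk.injEq]
      exact Prod.ext (by simp [h1]) (by simp [h2])
    · intro kl hkl; simp
    · intro uv huv
      rw [Finset.HasAntidiagonal.mem_antidiagonal] at huv
      have h1 := support_single_of_add huv hd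
      have h2 := support_single_of_add (by rw [add_comm]; exact huv) hd
      rw [coeff_substVar, coeff_substVar,
        if_pos (h1 ▸ Finsupp.support_single_subset),
        if_pos (h2 ▸ Finsupp.support_single_subset)]
  · rw [if_neg hd]
    symm
    apply Finset.sum_eq_zero
    intro uv huv
    rw [Finset.HasAntidiagonal.mem_antidiagonal] at huv
    rw [coeff_substVar, coeff_substVar]
    by_cases h1 : uv.1.support ⊆ ({p} : Finset (Fin m))
    · by_cases h2 : uv.2.support ⊆ ({p} : Finset (Fin m))
      · exfalso
        apply hd
        calc d.support = (uv.1 + uv.2).support := by rw [huv]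
          _ ⊆ uv.1.support ∪ uv.2.support := Finsupp.support_add
          _ ⊆ {p} := Finset.union_subset h1 h2
      · rw [if_neg h2, mul_zero]
    · rw [if_neg h1, zero_mul]

lemma coeff_prod_substVar {m : ℕ} (φ : Fin m → PowerSeries ℚ) (s : Finset (Fin m))
    (d : Fin m →₀ ℕ) :
    MvPowerSeries.coeff d (∏ q ∈ s, substVar q (φ q)) =
      if d.support ⊆ s then ∏ q ∈ s, PowerSeries.coeff (d q) (φ q) else 0 := by
  induction s using Finset.induction_on generalizing d with
  | empty =>
    simp only [Finset.prod_empty, Finset.subset_empty, Finsupp.support_eq_empty,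
      MvPowerSeries.coeff_one]
  | @insert a s ha ih =>
    rw [Finset.prod_insert ha, MvPowerSeries.coeff_mul]
    by_cases hd : d.support ⊆ insert a s
    · rw [if_pos hd, Finset.prod_insert ha]
      rw [Finset.sum_eq_single_of_mem (Finsupp.single a (d a), d.erase a)]
      · rw [coeff_substVar, if_pos (Finsupp.support_single_subset), Finsupp.single_eq_same, ih]
        have hsub : (d.erase a).support ⊆ s := by
          rw [Finsupp.support_erase]
          calc d.support.erase a ⊆ (insert a s).erase a := Finset.erase_subset_erase a hd
            _ = s := Finset.erase_insert ha
        rw [if_pos hsub]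
        congr 1
        apply Finset.prod_congr rfl
        intro q hq
        have hqa : q ≠ a := fun h => ha (h ▸ hq)
        rw [Finsupp.erase_ne hqa]
      · rw [Finset.HasAntidiagonal.mem_antidiagonal, Finsupp.single_add_erase]
      · rintro ⟨u, v⟩ huv hne
        rw [Finset.HasAntidiagonal.mem_antidiagonal] at huv
        rw [coeff_substVar, ih]
        by_cases h1 : u.support ⊆ ({a} : Finset (Fin m))
        · by_cases h2 : v.support ⊆ s
          · exfalso
            apply hne
            have hva : v a = 0 := by
              by_contra hva
              exact ha (h2 (Finsupp.mem_support_iff.mpr hva))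
            have hu : u = Finsupp.single a (d a) := by
              ext b
              by_cases hb : b = a
              · subst hb
                have : u b + v b = d b := by rw [← Finsupp.add_apply, huv]
                simp [hva] at this
                simp [this]
              · rw [Finsupp.single_eq_of_ne' (Ne.symm hb)]
                by_contra hub
                exact hb (Finset.mem_singleton.mp (h1 (Finsupp.mem_support_iff.mpr hub)))
              
            have hv : v = d.erase a := by
              ext b
              by_cases hb : b = a
              · subst hb; simp [hva]
              · rw [Finsupp.erase_ne hb]
                have : u b + v b = d b := by rw [← Finsupp.add_apply, huv]
                have hub : u b = 0 := by
                  by_contra hub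
                  exact hb (Finset.mem_singleton.mp (h1 (Finsupp.mem_support_iff.mpr hub)))
                omega
            rw [hu, hv]
          · rw [if_neg h2, mul_zero]
        · rw [if_neg h1, zero_mul]
    · rw [if_neg hd]
      apply Finset.sum_eq_zero
      rintro ⟨u, v⟩ huv
      rw [Finset.HasAntidiagonal.mem_antidiagonal] at huv
      rw [coeff_substVar, ih]
      by_cases h1 : u.support ⊆ ({a} : Finset (Fin m))
      · by_cases h2 : v.support ⊆ s
        · exfalso
          apply hd
          calc d.support = (u + v).support := by rw [huv]
            _ ⊆ u.support ∪ v.support := Finsupp.support_add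
            _ ⊆ insert a s := Finset.union_subset
                (h1.trans (Finset.singleton_subset_iff.mpr (Finset.mem_insert_self a s)))
                (h2.trans (Finset.subset_insert a s))
        · rw [if_neg h2, mul_zero]
      · rw [if_neg h1, zero_mul]

/-- For every integer `m ≥ 1`, consider in `ℚ⟦x₁,…,x_m⟧` the series
`F = (Σ_{p=1}^{m} B(x_p)) · Π_{q=1}^{m} B'(x_q)`, where `B = Σ bernoulli_n X^n/n! = X/(e^X−1)`
and `B' = Σ bernoulli'_n X^n/n! = X/(1−e^{−X})`.  Then the homogeneous component of total
degree `m` of `F` vanishes: every coefficient of `F` on a monomial of total degree `m` is `0`. -/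
theorem stmt_8 (m : ℕ) (hm : 1 ≤ m) (d : Fin m →₀ ℕ) (hd : (d.sum fun _ e => e) = m) :
    MvPowerSeries.coeff d
        ((∑ p : Fin m, substVar p (PowerSeries.mk fun n => bernoulli n / (n.factorial : ℚ))) *
          ∏ q : Fin m, substVar q (PowerSeries.mk fun n => bernoulli' n / (n.factorial : ℚ)))
      = 0 := by
  set B := PowerSeries.mk fun n => bernoulli n / (n.factorial : ℚ) with hB
  set B' := PowerSeries.mk fun n => bernoulli' n / (n.factorial : ℚ) with hB'
  have hterm : ∀ p : Fin m, substVar p B * ∏ q : Fin m, substVar q B' =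
      ∏ q : Fin m, substVar q (if q = p then B * B' else B') := by
    intro p
    conv_rhs => rw [← Finset.mul_prod_erase Finset.univ _ (Finset.mem_univ p)]
    rw [if_pos rfl, substVar_mul]
    conv_lhs => rw [← Finset.mul_prod_erase Finset.univ (fun q => substVar q B')
      (Finset.mem_univ p)]
    rw [← mul_assoc]
    congr 1
    apply Finset.prod_congr rfl
    intro q hq
    rw [if_neg (Finset.ne_of_mem_erase hq)]
  rw [Finset.sum_mul, map_sum]
  have hcoeff : ∀ p : Fin m,
      MvPowerSeries.coeff d (substVar p B * ∏ q : Fin m, substVar q B') =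
      (1 - (d p : ℚ)) * ∏ q : Fin m, PowerSeries.coeff (d q) B' := by
    intro p
    rw [hterm p, coeff_prod_substVar, if_pos (Finset.subset_univ _)]
    rw [← Finset.mul_prod_erase Finset.univ _ (Finset.mem_univ p), if_pos rfl]
    have h1 : PowerSeries.coeff (d p) (B * B')
        = (1 - (d p : ℚ)) * PowerSeries.coeff (d p) B' := by
      rw [hB, hB', key_mul, PowerSeries.coeff_mk, PowerSeries.coeff_mk]
    rw [h1]
    have h2 : ∀ q ∈ Finset.univ.erase p,
        PowerSeries.coeff (d q) (if q = p then B * B' else B')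
          = PowerSeries.coeff (d q) B' := by
      intro q hq
      rw [if_neg (Finset.ne_of_mem_erase hq)]
    rw [Finset.prod_congr rfl h2, mul_assoc,
      Finset.mul_prod_erase Finset.univ (fun q => PowerSeries.coeff (d q) B')
        (Finset.mem_univ p)]
  rw [Finset.sum_congr rfl (fun p _ => hcoeff p), ← Finset.sum_mul]
  have hsum : ∑ p : Fin m, ((1 : ℚ) - (d p : ℚ)) = 0 := by
    have hn : ∑ p : Fin m, d p = m := by
      have h2 := Finsupp.sum_fintype d (fun _ e => e) (fun _ => rfl)
      rw [← h2]
      exact hd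
    rw [Finset.sum_sub_distrib]
    simp only [Finset.sum_const, Finset.card_univ, Fintype.card_fin, nsmul_eq_mul, mul_one]
    rw [← Nat.cast_sum, hn]
    ring
  rw [hsum, zero_mul]
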